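/- Let a ≥ 1 and let L:(0,∞)→[0,∞) be measurable with L(t) ≤ M for all t > 0 and 0 < ∫₀^∞ t^{-a-1} L(t) dt < ∞. Then there exist a constant K₂ ∈ (0,∞) and τ₀ ∈ (0,1) such that for all τ ∈ (0,τ₀) and all x ∈ ℝ, m_a(x,τ) ≤ K₂ · exp(x²/2) · τ² · log(1/τ). -/

import Mathlib

open MeasureTheory Filter Set

/-- Posterior mean of 1 − κ under the one-group prior. -/
noncomputable def mA (a : ℝ) (L : ℝ → ℝ) (x τ : ℝ) : ℝ :=
  (τ ^ 2 * ∫ t in Set.Ioi (0:ℝ),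
      (1 + t * τ ^ 2) ^ (-(3:ℝ) / 2) * t ^ (-a) * L t *
        Real.exp (x ^ 2 / 2 * (t * τ ^ 2 / (1 + t * τ ^ 2)))) /
  (∫ t in Set.Ioi (0:ℝ),
      (1 + t * τ ^ 2) ^ (-(1:ℝ) / 2) * t ^ (-(a + 1)) * L t *
        Real.exp (x ^ 2 / 2 * (t * τ ^ 2 / (1 + t * τ ^ 2))))

set_option maxHeartbeats 1600000 in
/-- for `a ≥ 1`, uniformly in `x`, for small `τ`,
`m_a(x,τ) ≤ K₂ exp(x²/2) τ² log(1/τ)`. -/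
theorem mA_upper_bound_a_ge_one
    (a : ℝ) (ha : 1 ≤ a)
    (L : ℝ → ℝ) (hLmeas : Measurable L) (hLnonneg : ∀ t, 0 < t → 0 ≤ L t)
    (M : ℝ) (hLbound : ∀ t, 0 < t → L t ≤ M)
    (hLint : IntegrableOn (fun t => t ^ (-(a + 1)) * L t) (Set.Ioi 0))
    (hLpos : 0 < ∫ t in Set.Ioi (0:ℝ), t ^ (-(a + 1)) * L t) :
    ∃ K₂ ∈ Set.Ioi (0:ℝ), ∃ τ₀ ∈ Set.Ioo (0:ℝ) 1,
      ∀ τ ∈ Set.Ioo (0:ℝ) τ₀, ∀ x : ℝ,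
        mA a L x τ ≤ K₂ * Real.exp (x ^ 2 / 2) * τ ^ 2 * Real.log (1 / τ) := by
  set I := ∫ t in Set.Ioi (0:ℝ), t ^ (-(a + 1)) * L t with hIdef
  set G : ℝ → ℝ := fun t => t ^ (-(a + 1)) * L t with hGdef
  have hM0 : 0 ≤ M := le_trans (hLnonneg 1 one_pos) (hLbound 1 one_pos)
  have hGnonneg : ∀ t ∈ Set.Ioi (0:ℝ), 0 ≤ G t := fun t ht =>
    mul_nonneg (Real.rpow_nonneg (le_of_lt ht) _) (hLnonneg t ht)
  -- choose T with mass I/2 on (0, T]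
  obtain ⟨T, hT1, hTint⟩ : ∃ T, 1 ≤ T ∧ I / 2 ≤ ∫ t in Set.Ioc (0:ℝ) T, G t := by
    have htend := MeasureTheory.intervalIntegral_tendsto_integral_Ioi 0 hLint tendsto_id
    have h2 : ∀ᶠ T in atTop, I / 2 < ∫ t in (0:ℝ)..T, G t :=
      htend.eventually (eventually_gt_nhds (by linarith))
    obtain ⟨T, hT1, hT2⟩ := ((eventually_ge_atTop (1:ℝ)).and h2).exists
    refine ⟨T, hT1, ?_⟩
    rw [intervalIntegral.integral_of_le (by linarith)] at hT2
    exact hT2.le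
  set d : ℝ := (2:ℝ) ^ (-(1:ℝ)/2) with hddef
  have hd0 : 0 < d := Real.rpow_pos_of_pos two_pos _
  have hc0 : 0 < d * (I / 2) := mul_pos hd0 (by linarith)
  refine ⟨(I + 3 * M) / (d * (I / 2)), mem_Ioi.mpr (div_pos (by linarith) hc0),
    min (Real.exp (-1)) (Real.sqrt T)⁻¹, ⟨lt_min (Real.exp_pos _)
      (inv_pos.mpr (Real.sqrt_pos.mpr (by linarith))), ?_⟩, ?_⟩
  · exact lt_of_le_of_lt (min_le_left _ _) (Real.exp_lt_one_iff.mpr (by norm_num))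
  intro τ hτ x
  obtain ⟨hτ0, hτmin⟩ := hτ
  have hτe : τ < Real.exp (-1) := lt_of_lt_of_le hτmin (min_le_left _ _)
  have hτT : τ < (Real.sqrt T)⁻¹ := lt_of_lt_of_le hτmin (min_le_right _ _)
  have hτ1 : τ < 1 := lt_trans hτe (Real.exp_lt_one_iff.mpr (by norm_num))
  have hε : (0:ℝ) < τ ^ 2 := by positivity
  have hlog1 : 1 ≤ Real.log (1 / τ) := by
    rw [one_div]
    have h1 : Real.exp 1 ≤ τ⁻¹ := by
      rw [show Real.exp (-1) = (Real.exp 1)⁻¹ by rw [← Real.exp_neg]] at hτe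
      have := inv_strictAnti₀ hτ0 hτe
      rw [inv_inv] at this
      exact this.le
    exact (Real.le_log_iff_exp_le (by positivity)).mpr h1
  have hlog0 : 0 < Real.log (1 / τ) := lt_of_lt_of_le one_pos hlog1
  have hTτ : T * τ ^ 2 ≤ 1 := by
    have h1 : τ ^ 2 ≤ ((Real.sqrt T)⁻¹) ^ 2 := by
      apply pow_le_pow_left₀ hτ0.le hτT.le
    rw [inv_pow, Real.sq_sqrt (by linarith : (0:ℝ) ≤ T)] at h1
    calc T * τ ^ 2 ≤ T * T⁻¹ := by
          apply mul_le_mul_of_nonneg_left h1 (by linarith)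
      _ = 1 := mul_inv_cancel₀ (by linarith)
  set B : ℝ := (τ ^ 2)⁻¹ with hBdef
  have hB1 : 1 ≤ B := by
    rw [hBdef]
    exact (one_le_inv₀ hε).mpr (by nlinarith)
  have hB0 : (0:ℝ) < B := lt_of_lt_of_le one_pos hB1
  -- basic pointwise facts
  have h1t : ∀ t : ℝ, 0 < t → 0 < 1 + t * τ ^ 2 := fun t ht => by
    have := mul_nonneg ht.le (sq_nonneg τ); linarith
  have hfrac01 : ∀ t : ℝ, 0 < t → 0 ≤ t * τ ^ 2 / (1 + t * τ ^ 2) ∧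
      t * τ ^ 2 / (1 + t * τ ^ 2) ≤ 1 := by
    intro t ht
    constructor
    · positivity
    · rw [div_le_one (h1t t ht)]; linarith
  set E : ℝ → ℝ := fun t => Real.exp (x ^ 2 / 2 * (t * τ ^ 2 / (1 + t * τ ^ 2))) with hEdef
  have hE1 : ∀ t : ℝ, 0 < t → 1 ≤ E t := fun t ht =>
    Real.one_le_exp (mul_nonneg (by positivity) (hfrac01 t ht).1)
  have hEle : ∀ t : ℝ, 0 < t → E t ≤ Real.exp (x ^ 2 / 2) := by
    intro t ht
    apply Real.exp_le_exp.mpr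
    exact mul_le_of_le_one_right (by positivity) (hfrac01 t ht).2
  -- Denominator
  set fD : ℝ → ℝ := fun t =>
    (1 + t * τ ^ 2) ^ (-(1:ℝ) / 2) * t ^ (-(a + 1)) * L t * E t with hfDdef
  have hfD_nonneg : ∀ t : ℝ, 0 < t → 0 ≤ fD t := by
    intro t ht
    have := hLnonneg t ht
    have : (0:ℝ) ≤ (1 + t * τ ^ 2) ^ (-(1:ℝ) / 2) := Real.rpow_nonneg (h1t t ht).le _
    positivity
  have hfD_meas : Measurable fD := by
    apply Measurable.mul
    apply Measurable.mul
    apply Measurable.mul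
    · fun_prop
    · fun_prop
    · exact hLmeas
    · fun_prop
  have hfD_int : IntegrableOn fD (Set.Ioi 0) := by
    apply Integrable.mono' (hLint.const_mul (Real.exp (x ^ 2 / 2)))
      hfD_meas.aestronglyMeasurable
    filter_upwards [ae_restrict_mem measurableSet_Ioi] with t ht
    rw [Real.norm_eq_abs, abs_of_nonneg (hfD_nonneg t ht)]
    have hA1 : (1 + t * τ ^ 2) ^ (-(1:ℝ) / 2) ≤ 1 :=
      Real.rpow_le_one_of_one_le_of_nonpos
        (le_add_of_nonneg_right (mul_nonneg (le_of_lt ht) (sq_nonneg τ))) (by norm_num)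
    have hA0 : (0:ℝ) ≤ (1 + t * τ ^ 2) ^ (-(1:ℝ) / 2) :=
      Real.rpow_nonneg (h1t t ht).le _
    have hG0 := hGnonneg t ht
    have hE0 : (0:ℝ) ≤ E t := le_trans zero_le_one (hE1 t ht)
    calc (1 + t * τ ^ 2) ^ (-(1:ℝ) / 2) * t ^ (-(a + 1)) * L t * E t
        = ((1 + t * τ ^ 2) ^ (-(1:ℝ) / 2) * G t) * E t := by rw [hGdef]; ring
      _ ≤ (1 * G t) * Real.exp (x ^ 2 / 2) := by
          apply mul_le_mul (mul_le_mul_of_nonneg_right hA1 hG0) (hEle t ht) hE0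
          nlinarith
      _ = Real.exp (x ^ 2 / 2) * G t := by ring
  have hD_lower : d * (I / 2) ≤ ∫ t in Set.Ioi (0:ℝ), fD t := by
    have step1 : d * (I / 2) ≤ d * ∫ t in Set.Ioc (0:ℝ) T, G t :=
      mul_le_mul_of_nonneg_left hTint hd0.le
    have step2 : d * ∫ t in Set.Ioc (0:ℝ) T, G t = ∫ t in Set.Ioc (0:ℝ) T, d * G t :=
      (MeasureTheory.integral_const_mul d G).symm
    have step3 : ∫ t in Set.Ioc (0:ℝ) T, d * G t ≤ ∫ t in Set.Ioc (0:ℝ) T, fD t := by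
      apply setIntegral_mono_on
        ((hLint.mono_set Set.Ioc_subset_Ioi_self).const_mul d)
        (hfD_int.mono_set Set.Ioc_subset_Ioi_self) measurableSet_Ioc
      intro t ht
      obtain ⟨ht0, htT⟩ := ht
      have htε : t * τ ^ 2 ≤ 1 := by
        calc t * τ ^ 2 ≤ T * τ ^ 2 := mul_le_mul_of_nonneg_right htT hε.le
          _ ≤ 1 := hTτ
      have hdA : d ≤ (1 + t * τ ^ 2) ^ (-(1:ℝ) / 2) := by
        rw [hddef]
        exact Real.rpow_le_rpow_of_nonpos (h1t t ht0) (by linarith) (by norm_num)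
      have hG0 := hGnonneg t ht0
      calc d * G t ≤ (1 + t * τ ^ 2) ^ (-(1:ℝ) / 2) * G t := by
            exact mul_le_mul_of_nonneg_right hdA hG0
        _ ≤ (1 + t * τ ^ 2) ^ (-(1:ℝ) / 2) * G t * E t := by
            apply le_mul_of_one_le_right _ (hE1 t ht0)
            have : (0:ℝ) ≤ (1 + t * τ ^ 2) ^ (-(1:ℝ) / 2) :=
              Real.rpow_nonneg (h1t t ht0).le _
            positivity
        _ = fD t := by rw [hfDdef, hGdef]; ring
    have step4 : ∫ t in Set.Ioc (0:ℝ) T, fD t ≤ ∫ t in Set.Ioi (0:ℝ), fD t := by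
      apply setIntegral_mono_set hfD_int
      · filter_upwards [ae_restrict_mem measurableSet_Ioi] with t ht
        exact hfD_nonneg t ht
      · exact HasSubset.Subset.eventuallyLE Set.Ioc_subset_Ioi_self
    linarith
  have hD_pos : 0 < ∫ t in Set.Ioi (0:ℝ), fD t := lt_of_lt_of_le hc0 hD_lower
  -- Numerator
  set h : ℝ → ℝ := fun t => (1 + t * τ ^ 2) ^ (-(3:ℝ) / 2) * t ^ (-a) * L t with hhdef
  set fN : ℝ → ℝ := fun t => h t * E t with hfNdef
  have hA30 : ∀ t : ℝ, 0 < t → (0:ℝ) ≤ (1 + t * τ ^ 2) ^ (-(3:ℝ) / 2) := fun t ht =>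
    Real.rpow_nonneg (h1t t ht).le _
  have hA31 : ∀ t : ℝ, 0 < t → (1 + t * τ ^ 2) ^ (-(3:ℝ) / 2) ≤ 1 := fun t ht =>
    Real.rpow_le_one_of_one_le_of_nonpos
      (le_add_of_nonneg_right (mul_nonneg ht.le (sq_nonneg τ))) (by norm_num)
  have hh_nonneg : ∀ t : ℝ, 0 < t → 0 ≤ h t := by
    intro t ht
    exact mul_nonneg (mul_nonneg (hA30 t ht) (Real.rpow_nonneg ht.le _)) (hLnonneg t ht)
  have hh_meas : Measurable h := by
    apply Measurable.mul
    apply Measurable.mul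
    · fun_prop
    · fun_prop
    · exact hLmeas
  -- integrability of h on the three pieces
  have hbound1 : ∀ t ∈ Set.Ioc (0:ℝ) 1, h t ≤ G t := by
    intro t ht
    obtain ⟨ht0, ht1⟩ := ht
    have hpow : t ^ (-a) ≤ t ^ (-(a + 1)) :=
      Real.rpow_le_rpow_of_exponent_ge ht0 ht1 (by linarith)
    have key : (1 + t * τ ^ 2) ^ (-(3:ℝ) / 2) * t ^ (-a) ≤ 1 * t ^ (-(a + 1)) := by
      calc (1 + t * τ ^ 2) ^ (-(3:ℝ) / 2) * t ^ (-a)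
          ≤ 1 * t ^ (-a) := by
            exact mul_le_mul_of_nonneg_right (hA31 t ht0) (Real.rpow_nonneg ht0.le _)
        _ = t ^ (-a) := one_mul _
        _ ≤ 1 * t ^ (-(a + 1)) := by rw [one_mul]; exact hpow
    have key2 : h t ≤ 1 * t ^ (-(a + 1)) * L t := by
      exact mul_le_mul_of_nonneg_right key (hLnonneg t ht0)
    calc h t ≤ 1 * t ^ (-(a + 1)) * L t := key2
      _ = G t := by rw [hGdef]; ring_nf
  have hi1 : IntegrableOn h (Set.Ioc (0:ℝ) 1) := by
    apply Integrable.mono' (hLint.mono_set Set.Ioc_subset_Ioi_self)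
      hh_meas.aestronglyMeasurable
    filter_upwards [ae_restrict_mem measurableSet_Ioc] with t ht
    rw [Real.norm_eq_abs, abs_of_nonneg (hh_nonneg t ht.1)]
    exact hbound1 t ht
  have hbound2 : ∀ t ∈ Set.Ioc (1:ℝ) B, h t ≤ M * t⁻¹ := by
    intro t ht
    obtain ⟨ht1, htB⟩ := ht
    have ht0 : (0:ℝ) < t := lt_trans one_pos ht1
    have hpow : t ^ (-a) ≤ t⁻¹ := by
      rw [← Real.rpow_neg_one t]
      exact Real.rpow_le_rpow_of_exponent_le ht1.le (by linarith)
    have hinv0 : (0:ℝ) ≤ t⁻¹ := by positivity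
    have key : (1 + t * τ ^ 2) ^ (-(3:ℝ) / 2) * t ^ (-a) ≤ 1 * t⁻¹ := by
      exact mul_le_mul (hA31 t ht0) hpow (Real.rpow_nonneg ht0.le _) zero_le_one
    have key2 : h t ≤ (1 * t⁻¹) * M := by
      exact mul_le_mul key (hLbound t ht0) (hLnonneg t ht0) (by positivity)
    calc h t ≤ (1 * t⁻¹) * M := key2
      _ = M * t⁻¹ := by ring
  have hi2 : IntegrableOn (fun t : ℝ => M * t⁻¹) (Set.Ioc (1:ℝ) B) := by
    rw [← intervalIntegrable_iff_integrableOn_Ioc_of_le hB1]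
    apply IntervalIntegrable.const_mul
    refine intervalIntegral.intervalIntegrable_inv (fun y hy => ?_) continuousOn_id
    rw [Set.uIcc_of_le hB1] at hy
    exact ne_of_gt (lt_of_lt_of_le one_pos hy.1)
  have hi2' : IntegrableOn h (Set.Ioc (1:ℝ) B) := by
    apply Integrable.mono' hi2 hh_meas.aestronglyMeasurable
    filter_upwards [ae_restrict_mem measurableSet_Ioc] with t ht
    rw [Real.norm_eq_abs, abs_of_nonneg (hh_nonneg t (lt_trans one_pos ht.1))]
    exact hbound2 t ht
  have hbound3 : ∀ t ∈ Set.Ioi B, h t ≤ (M * (τ ^ 2) ^ (-(3:ℝ)/2)) * t ^ (-(5:ℝ)/2) := by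
    intro t ht
    have htB : B < t := ht
    have ht1 : (1:ℝ) ≤ t := le_trans hB1 htB.le
    have ht0 : (0:ℝ) < t := lt_of_lt_of_le one_pos ht1
    have hstep1 : (1 + t * τ ^ 2) ^ (-(3:ℝ) / 2) ≤ (t * τ ^ 2) ^ (-(3:ℝ) / 2) :=
      Real.rpow_le_rpow_of_nonpos (by positivity) (by linarith) (by norm_num)
    have hmul : (t * τ ^ 2) ^ (-(3:ℝ) / 2) = t ^ (-(3:ℝ)/2) * (τ ^ 2) ^ (-(3:ℝ)/2) :=
      Real.mul_rpow ht0.le hε.le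
    have hpow : t ^ (-a) ≤ t ^ (-(1:ℝ)) :=
      Real.rpow_le_rpow_of_exponent_le ht1 (by linarith)
    have hcomb : t ^ (-(3:ℝ)/2) * t ^ (-(1:ℝ)) = t ^ (-(5:ℝ)/2) := by
      rw [← Real.rpow_add ht0]; norm_num
    calc h t = (1 + t * τ ^ 2) ^ (-(3:ℝ) / 2) * t ^ (-a) * L t := rfl
      _ ≤ (t * τ ^ 2) ^ (-(3:ℝ) / 2) * t ^ (-(1:ℝ)) * M := by
          apply mul_le_mul _ (hLbound t ht0) (hLnonneg t ht0) (by positivity)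
          exact mul_le_mul hstep1 hpow (Real.rpow_nonneg ht0.le _)
            (Real.rpow_nonneg (by positivity) _)

      _ = (M * (τ ^ 2) ^ (-(3:ℝ)/2)) * (t ^ (-(3:ℝ)/2) * t ^ (-(1:ℝ))) := by
          rw [hmul]; ring
      _ = (M * (τ ^ 2) ^ (-(3:ℝ)/2)) * t ^ (-(5:ℝ)/2) := by rw [hcomb]
  have hi3b : IntegrableOn (fun t : ℝ => (M * (τ ^ 2) ^ (-(3:ℝ)/2)) * t ^ (-(5:ℝ)/2))
      (Set.Ioi B) := by
    exact (integrableOn_Ioi_rpow_of_lt (by norm_num) hB0).const_mul _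
  have hi3 : IntegrableOn h (Set.Ioi B) := by
    apply Integrable.mono' hi3b hh_meas.aestronglyMeasurable
    filter_upwards [ae_restrict_mem measurableSet_Ioi] with t ht
    have ht0 : (0:ℝ) < t := lt_trans hB0 ht
    rw [Real.norm_eq_abs, abs_of_nonneg (hh_nonneg t ht0)]
    exact hbound3 t ht
  have hsplit : Set.Ioi (0:ℝ) = (Set.Ioc (0:ℝ) 1 ∪ Set.Ioc 1 B) ∪ Set.Ioi B := by
    rw [Set.Ioc_union_Ioc_eq_Ioc zero_le_one hB1, Set.Ioc_union_Ioi_eq_Ioi hB0.le]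
  have hdisj1 : Disjoint (Set.Ioc (0:ℝ) 1) (Set.Ioc 1 B) := by
    rw [Set.disjoint_left]
    rintro y ⟨_, hy1⟩ ⟨hy2, _⟩
    exact absurd hy2 (not_lt.mpr hy1)
  have hdisj2 : Disjoint (Set.Ioc (0:ℝ) 1 ∪ Set.Ioc 1 B) (Set.Ioi B) := by
    rw [Set.Ioc_union_Ioc_eq_Ioc zero_le_one hB1, Set.disjoint_left]
    rintro y ⟨_, hy1⟩ hy2
    exact absurd (Set.mem_Ioi.mp hy2) (not_lt.mpr hy1)
  have hh_int : IntegrableOn h (Set.Ioi 0) := by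
    rw [hsplit]
    exact (hi1.union hi2').union hi3
  have hh_split : ∫ t in Set.Ioi (0:ℝ), h t =
      ((∫ t in Set.Ioc (0:ℝ) 1, h t) + ∫ t in Set.Ioc (1:ℝ) B, h t) +
        ∫ t in Set.Ioi B, h t := by
    rw [hsplit, setIntegral_union hdisj2 measurableSet_Ioi (hi1.union hi2') hi3,
      setIntegral_union hdisj1 measurableSet_Ioc hi1 hi2']
  -- piece 1
  have hP1 : ∫ t in Set.Ioc (0:ℝ) 1, h t ≤ I := by
    calc ∫ t in Set.Ioc (0:ℝ) 1, h t ≤ ∫ t in Set.Ioc (0:ℝ) 1, G t := by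
          exact setIntegral_mono_on hi1 (hLint.mono_set Set.Ioc_subset_Ioi_self)
            measurableSet_Ioc hbound1
      _ ≤ I := by
          apply setIntegral_mono_set hLint
          · filter_upwards [ae_restrict_mem measurableSet_Ioi] with t ht
            exact hGnonneg t ht
          · exact HasSubset.Subset.eventuallyLE Set.Ioc_subset_Ioi_self
  -- piece 2
  have hlogB : Real.log B = 2 * Real.log (1 / τ) := by
    rw [hBdef, Real.log_inv, Real.log_pow, one_div, Real.log_inv]
    push_cast; ring
  have hP2 : ∫ t in Set.Ioc (1:ℝ) B, h t ≤ M * (2 * Real.log (1 / τ)) := by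
    calc ∫ t in Set.Ioc (1:ℝ) B, h t ≤ ∫ t in Set.Ioc (1:ℝ) B, M * t⁻¹ := by
          exact setIntegral_mono_on hi2' hi2 measurableSet_Ioc hbound2
      _ = M * ∫ t in Set.Ioc (1:ℝ) B, t⁻¹ := MeasureTheory.integral_const_mul M _
      _ = M * (2 * Real.log (1 / τ)) := by
          rw [← intervalIntegral.integral_of_le hB1, integral_inv, div_one, hlogB]
          rw [Set.uIcc_of_le hB1]
          rintro ⟨h0, _⟩
          exact absurd h0 (by norm_num)
  -- piece 3
  have hP3 : ∫ t in Set.Ioi B, h t ≤ M := by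
    have hmono : ∫ t in Set.Ioi B, h t ≤
        ∫ t in Set.Ioi B, (M * (τ ^ 2) ^ (-(3:ℝ)/2)) * t ^ (-(5:ℝ)/2) := by
      exact setIntegral_mono_on hi3 hi3b measurableSet_Ioi hbound3
    have hval : ∫ t in Set.Ioi B, (M * (τ ^ 2) ^ (-(3:ℝ)/2)) * t ^ (-(5:ℝ)/2)
        = (M * (τ ^ 2) ^ (-(3:ℝ)/2)) * (-B ^ (-(5:ℝ)/2 + 1) / (-(5:ℝ)/2 + 1)) := by
      rw [MeasureTheory.integral_const_mul, integral_Ioi_rpow_of_lt (by norm_num) hB0]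
    have hBv : B ^ (-(5:ℝ)/2 + 1) = ((τ ^ 2) ^ (-(3:ℝ)/2))⁻¹ := by
      rw [show (-(5:ℝ)/2 + 1) = -(3:ℝ)/2 by norm_num, hBdef, Real.inv_rpow hε.le]
    have hu : (0:ℝ) < (τ ^ 2) ^ (-(3:ℝ)/2) := Real.rpow_pos_of_pos hε _
    have hfin : (M * (τ ^ 2) ^ (-(3:ℝ)/2)) * (-B ^ (-(5:ℝ)/2 + 1) / (-(5:ℝ)/2 + 1))
        = 2/3 * M := by
      rw [hBv]
      field_simp
      ring
    rw [hval, hfin] at hmono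
    linarith
  -- combine numerator bound
  have hh_total : ∫ t in Set.Ioi (0:ℝ), h t ≤ (I + 3 * M) * Real.log (1 / τ) := by
    rw [hh_split]
    have hI0 : 0 ≤ I := hLpos.le
    nlinarith [hP1, hP2, hP3, mul_le_mul_of_nonneg_left hlog1 hI0,
      mul_le_mul_of_nonneg_left hlog1 hM0]
  have hN_le : ∫ t in Set.Ioi (0:ℝ), fN t ≤
      Real.exp (x ^ 2 / 2) * ∫ t in Set.Ioi (0:ℝ), h t := by
    rw [← MeasureTheory.integral_const_mul]
    apply integral_mono_of_nonneg
    · filter_upwards [ae_restrict_mem measurableSet_Ioi] with t ht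
      exact mul_nonneg (hh_nonneg t ht) (le_trans zero_le_one (hE1 t ht))
    · exact hh_int.const_mul _
    · filter_upwards [ae_restrict_mem measurableSet_Ioi] with t ht
      calc h t * E t ≤ h t * Real.exp (x ^ 2 / 2) := by
            exact mul_le_mul_of_nonneg_left (hEle t ht) (hh_nonneg t ht)
        _ = Real.exp (x ^ 2 / 2) * h t := mul_comm _ _
  have hN_nonneg : 0 ≤ ∫ t in Set.Ioi (0:ℝ), fN t := by
    apply integral_nonneg_of_ae
    filter_upwards [ae_restrict_mem measurableSet_Ioi] with t ht
    exact mul_nonneg (hh_nonneg t ht) (le_trans zero_le_one (hE1 t ht))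
  -- final algebra
  have hmA : mA a L x τ =
      (τ ^ 2 * ∫ t in Set.Ioi (0:ℝ), fN t) / (∫ t in Set.Ioi (0:ℝ), fD t) := rfl
  rw [hmA, div_le_iff₀ hD_pos]
  have hNb : (∫ t in Set.Ioi (0:ℝ), fN t) ≤
      Real.exp (x ^ 2 / 2) * ((I + 3 * M) * Real.log (1 / τ)) := by
    calc (∫ t in Set.Ioi (0:ℝ), fN t)
        ≤ Real.exp (x ^ 2 / 2) * (∫ t in Set.Ioi (0:ℝ), h t) := hN_le
      _ ≤ Real.exp (x ^ 2 / 2) * ((I + 3 * M) * Real.log (1 / τ)) := by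
          exact mul_le_mul_of_nonneg_left hh_total (Real.exp_nonneg _)
  have hKnn : 0 ≤ (I + 3 * M) / (d * (I / 2)) * Real.exp (x ^ 2 / 2) * τ ^ 2 *
      Real.log (1 / τ) := by
    apply mul_nonneg (mul_nonneg (mul_nonneg (div_nonneg (by linarith) hc0.le)
      (Real.exp_nonneg _)) hε.le) hlog0.le
  calc τ ^ 2 * ∫ t in Set.Ioi (0:ℝ), fN t
      ≤ τ ^ 2 * (Real.exp (x ^ 2 / 2) * ((I + 3 * M) * Real.log (1 / τ))) := by
        exact mul_le_mul_of_nonneg_left hNb hε.le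
    _ = ((I + 3 * M) / (d * (I / 2)) * Real.exp (x ^ 2 / 2) * τ ^ 2 *
          Real.log (1 / τ)) * (d * (I / 2)) := by
        field_simp
    _ ≤ ((I + 3 * M) / (d * (I / 2)) * Real.exp (x ^ 2 / 2) * τ ^ 2 *
          Real.log (1 / τ)) * (∫ t in Set.Ioi (0:ℝ), fD t) := by
        exact mul_le_mul_of_nonneg_left hD_lower hKnn
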